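/- arXiv:2411.00610 — 2 statements merged into one kernel-verified Lean document; each statement's English description precedes it below -/
import Mathlib

section
/- (Second-moment bound for the squared-TD-error increment). Fix h ∈ {1,…,H}, s ∈ S, a ∈ A, and let H ≥ 1. Suppose Q_h, Q_{h+1} : S × A → [0, H] and r_h : S × A → [0, 1]. Define, for s' ∈ S, X(s') := ( Q_h(s,a) − r_h(s,a) − max_{a' ∈ A} Q_{h+1}(s',a') )² − ( (T^{r}_h Q_{h+1})(s,a) − r_h(s,a) − max_{a' ∈ A} Q_{h+1}(s',a') )². Then E_{s' ~ P_h(s,a)}[ X(s')² ] ≤ 16 H² · E_{s' ~ P_h(s,a)}[ X(s') ]. -/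
open scoped BigOperators

/-- Expectation of a real-valued function under a probability mass function
on a finite type. -/
noncomputable def pExp {α : Type*} [Fintype α] (p : PMF α) (f : α → ℝ) : ℝ :=
  ∑ x, (p x).toReal * f x

/-- One-step Bellman backup at step `h` for reward component `rh : S → A → ℝ`:
`(T^r_h Q)(s,a) = r_h(s,a) + E_{s' ~ P_h(s,a)}[ max_{a'} Q(s',a') ]`. -/
noncomputable def bellman {S A : Type*} [Fintype S] [Fintype A]
    (P : ℕ → S → A → PMF S) (h : ℕ) (rh : S → A → ℝ) (Q : S → A → ℝ)
    (s : S) (a : A) : ℝ :=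
  rh s a + pExp (P h s a) (fun s' => ⨆ a', Q s' a')

lemma pmf_sum_toReal_one {α : Type*} [Fintype α] (p : PMF α) :
    ∑ x, (p x).toReal = 1 := by
  have h1 : ∑ x, p x = 1 := by
    have := p.tsum_coe
    rwa [tsum_fintype] at this
  have h2 : ∑ x, (p x).toReal = (∑ x, p x).toReal := by
    rw [ENNReal.toReal_sum]
    intro x _
    exact (p.apply_lt_top x).ne
  rw [h2, h1, ENNReal.toReal_one]

lemma pExp_const {α : Type*} [Fintype α] (p : PMF α) (c : ℝ) :
    pExp p (fun _ => c) = c := by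
  simp [pExp, ← Finset.sum_mul, pmf_sum_toReal_one]

lemma pExp_mono {α : Type*} [Fintype α] (p : PMF α) {f g : α → ℝ}
    (h : ∀ x, f x ≤ g x) : pExp p f ≤ pExp p g := by
  apply Finset.sum_le_sum
  intro x _
  exact mul_le_mul_of_nonneg_left (h x) ENNReal.toReal_nonneg

lemma pExp_mul_left {α : Type*} [Fintype α] (p : PMF α) (k : ℝ) (f : α → ℝ) :
    pExp p (fun x => k * f x) = k * pExp p f := by
  simp only [pExp, Finset.mul_sum, mul_left_comm, mul_assoc]

lemma pExp_add {α : Type*} [Fintype α] (p : PMF α) (f g : α → ℝ) :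
    pExp p (fun x => f x + g x) = pExp p f + pExp p g := by
  simp [pExp, mul_add, Finset.sum_add_distrib]

/-- Second-moment bound for the squared-TD-error increment:
`E[X(s')²] ≤ 16 H² E[X(s')]` where
`X(s') = (Q_h(s,a) − r_h(s,a) − max_{a'} Q_{h+1}(s',a'))²
       − ((T^r_h Q_{h+1})(s,a) − r_h(s,a) − max_{a'} Q_{h+1}(s',a'))²`. -/
theorem second_moment_bound {S A : Type*} [Fintype S] [Fintype A]
    [Nonempty S] [Nonempty A]
    (H : ℕ) (hH : 1 ≤ H) (P : ℕ → S → A → PMF S)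
    (h : ℕ) (hh1 : 1 ≤ h) (hh2 : h ≤ H) (s : S) (a : A)
    (Qh Qh1 : S → A → ℝ) (rh : S → A → ℝ)
    (hQh : ∀ s' a', 0 ≤ Qh s' a' ∧ Qh s' a' ≤ (H : ℝ))
    (hQh1 : ∀ s' a', 0 ≤ Qh1 s' a' ∧ Qh1 s' a' ≤ (H : ℝ))
    (hrh : ∀ s' a', 0 ≤ rh s' a' ∧ rh s' a' ≤ 1)
    (X : S → ℝ)
    (hX : ∀ s', X s' =
      (Qh s a - rh s a - ⨆ a', Qh1 s' a') ^ 2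
        - (bellman P h rh Qh1 s a - rh s a - ⨆ a', Qh1 s' a') ^ 2) :
    pExp (P h s a) (fun s' => (X s') ^ 2)
      ≤ 16 * (H : ℝ) ^ 2 * pExp (P h s a) X := by
  set p := P h s a
  set m : S → ℝ := fun s' => ⨆ a', Qh1 s' a' with hm
  set c : ℝ := Qh s a - rh s a with hc
  set b : ℝ := pExp p m with hb
  have hHR : (1 : ℝ) ≤ (H : ℝ) := by exact_mod_cast hH
  -- bounds on m
  have hm0 : ∀ s', 0 ≤ m s' := by
    intro s'
    obtain ⟨a0⟩ := (inferInstance : Nonempty A)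
    exact le_trans (hQh1 s' a0).1 (le_ciSup (Set.Finite.bddAbove (Set.finite_range _)) a0)
  have hmH : ∀ s', m s' ≤ (H : ℝ) := by
    intro s'
    exact ciSup_le fun a' => (hQh1 s' a').2
  -- bounds on b
  have hb0 : 0 ≤ b := by
    have := pExp_mono p hm0
    rwa [pExp_const] at this
  have hbH : b ≤ (H : ℝ) := by
    have := pExp_mono p hmH
    rwa [pExp_const] at this
  -- bounds on c
  have hc1 : -1 ≤ c := by
    have := (hQh s a).1; have := (hrh s a).2; simp only [hc]; linarith
  have hcH : c ≤ (H : ℝ) := by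
    have := (hQh s a).2; have := (hrh s a).1; simp only [hc]; linarith
  have hbell : bellman P h rh Qh1 s a - rh s a = b := by
    simp [bellman, hb, hm]
    rfl
  -- rewrite X
  have hX' : ∀ s', X s' = (c - b) * (c + b - 2 * m s') := by
    intro s'
    rw [hX s', hbell]
    ring
  -- E[X] = (c - b)^2
  have hEX : pExp p X = (c - b) ^ 2 := by
    have h1 : pExp p X = (c - b) * pExp p (fun s' => c + b - 2 * m s') := by
      rw [← pExp_mul_left]
      congr 1
      funext s'
      exact hX' s'
    have h2 : pExp p (fun s' => c + b - 2 * m s') = c - b := by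
      have : (fun s' => c + b - 2 * m s') = fun s' => (c + b) + (-2) * m s' := by
        funext s'; ring
      rw [this, pExp_add, pExp_const, pExp_mul_left, ← hb]
      ring
    rw [h1, h2]; ring
  -- pointwise bound on X^2
  have hpt : ∀ s', (X s') ^ 2 ≤ 16 * (H : ℝ) ^ 2 * (c - b) ^ 2 := by
    intro s'
    rw [hX' s']
    have h1 : (c + b - 2 * m s') ^ 2 ≤ (4 * (H : ℝ)) ^ 2 := by
      apply sq_le_sq'
      · have := hm0 s'; have := hmH s'; linarith
      · have := hm0 s'; have := hmH s'; linarith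
    calc ((c - b) * (c + b - 2 * m s')) ^ 2
        = (c - b) ^ 2 * (c + b - 2 * m s') ^ 2 := by ring
      _ ≤ (c - b) ^ 2 * (4 * (H : ℝ)) ^ 2 :=
          mul_le_mul_of_nonneg_left h1 (sq_nonneg _)
      _ = 16 * (H : ℝ) ^ 2 * (c - b) ^ 2 := by ring
  calc pExp p (fun s' => (X s') ^ 2)
      ≤ pExp p (fun _ => 16 * (H : ℝ) ^ 2 * (c - b) ^ 2) := pExp_mono p hpt
    _ = 16 * (H : ℝ) ^ 2 * (c - b) ^ 2 := pExp_const p _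
    _ = 16 * (H : ℝ) ^ 2 * pExp p X := by rw [hEX]
end

section
/- (Lemma B.5, Freedman's inequality). Let (Ω, 𝓕, P) be a probability space with a filtration (𝓕_t)_{0 ≤ t ≤ T}, and let (X_t)_{1 ≤ t ≤ T} be real-valued random variables such that each X_t is 𝓕_t-measurable, E[X_t | 𝓕_{t−1}] = 0 almost surely, and |X_t| ≤ R almost surely, where R > 0. Then for every η ∈ (0, 1/R] and every δ ∈ (0, 1), with probability at least 1 − δ: Σ_{t=1}^T X_t ≤ η · Σ_{t=1}^T E[X_t² | 𝓕_{t−1}] + log(1/δ)/η. -/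
open MeasureTheory
open scoped BigOperators

lemma exp_le_one_add_add_sq {x : ℝ} (hx : |x| ≤ 1) : Real.exp x ≤ 1 + x + x ^ 2 := by
  have h := Real.exp_bound hx (by norm_num : 0 < 2)
  have hs : ∑ m ∈ Finset.range 2, x ^ m / m.factorial = 1 + x := by
    simp [Finset.sum_range_succ]
  rw [hs] at h
  have h2 := (abs_sub_le_iff.1 h).1
  have h3 : |x| ^ 2 = x ^ 2 := sq_abs x
  norm_num [Nat.factorial] at h2
  nlinarith [sq_nonneg x]

/-- Lemma B.5 (Freedman's inequality): for a martingale difference sequence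
`(X_t)_{1 ≤ t ≤ T}` adapted to the filtration `(𝓕_t)` with `|X_t| ≤ R` a.s.,
for every `η ∈ (0, 1/R]` and `δ ∈ (0,1)`, with probability at least `1 − δ`,
`Σ_{t=1}^T X_t ≤ η Σ_{t=1}^T E[X_t² | 𝓕_{t−1}] + log(1/δ)/η`. -/
theorem freedman_inequality {Ω : Type*} {m : MeasurableSpace Ω}
    (μ : Measure Ω) [IsProbabilityMeasure μ]
    (𝓕 : Filtration ℕ m)
    (T : ℕ) (hT : 1 ≤ T) (R : ℝ) (hR : 0 < R)
    (X : ℕ → Ω → ℝ)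
    (hadapted : ∀ t ∈ Finset.Icc 1 T, StronglyMeasurable[𝓕 t] (X t))
    (hcond : ∀ t ∈ Finset.Icc 1 T, μ[X t | 𝓕 (t - 1)] =ᵐ[μ] 0)
    (hbdd : ∀ t ∈ Finset.Icc 1 T, ∀ᵐ ω ∂μ, |X t ω| ≤ R)
    (η : ℝ) (hη1 : 0 < η) (hη2 : η ≤ 1 / R)
    (δ : ℝ) (hδ1 : 0 < δ) (hδ2 : δ < 1) :
    ENNReal.ofReal (1 - δ) ≤
      μ {ω | ∑ t ∈ Finset.Icc 1 T, X t ω ≤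
          η * ∑ t ∈ Finset.Icc 1 T, (μ[fun ω' => (X t ω') ^ 2 | 𝓕 (t - 1)]) ω
            + Real.log (1 / δ) / η} := by
  classical
  let Y : ℕ → Ω → ℝ := fun t => μ[fun ω' => (X t ω') ^ 2 | 𝓕 (t - 1)]
  have hηR : η * R ≤ 1 := (le_div_iff₀ hR).1 hη2
  -- measurability
  have hYm : ∀ t, StronglyMeasurable[𝓕 (t - 1)] (Y t) := fun t => stronglyMeasurable_condExp
  have hXm : ∀ t ∈ Finset.Icc 1 T, StronglyMeasurable[m] (X t) :=
    fun t ht => (hadapted t ht).mono (𝓕.le t)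
  have hY0 : ∀ t, 0 ≤ᵐ[μ] Y t := fun t => condExp_nonneg (ae_of_all _ fun ω => sq_nonneg _)
  -- integrability
  have hXint : ∀ t ∈ Finset.Icc 1 T, Integrable (X t) μ := fun t ht =>
    Integrable.mono' (integrable_const R) (hXm t ht).aestronglyMeasurable
      ((hbdd t ht).mono fun ω h => by rwa [Real.norm_eq_abs])
  have hX2int : ∀ t ∈ Finset.Icc 1 T, Integrable (fun ω => (X t ω) ^ 2) μ := fun t ht =>
    Integrable.mono' (integrable_const (R ^ 2)) ((hXm t ht).pow 2).aestronglyMeasurable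
      ((hbdd t ht).mono fun ω h => by
        rw [Real.norm_eq_abs, abs_pow]
        exact pow_le_pow_left₀ (abs_nonneg _) h 2)
  have hexpXm : ∀ t ∈ Finset.Icc 1 T,
      AEStronglyMeasurable (fun ω => Real.exp (η * X t ω)) μ := fun t ht =>
    (Real.continuous_exp.comp_stronglyMeasurable
      (stronglyMeasurable_const.mul (hXm t ht))).aestronglyMeasurable
  have hexpXint : ∀ t ∈ Finset.Icc 1 T,
      Integrable (fun ω => Real.exp (η * X t ω)) μ := fun t ht =>
    Integrable.mono' (integrable_const (Real.exp (η * R))) (hexpXm t ht)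
      ((hbdd t ht).mono fun ω h => by
        rw [Real.norm_eq_abs, abs_of_pos (Real.exp_pos _)]
        exact Real.exp_le_exp.2 (by nlinarith [(abs_le.1 h).2]))
  -- the exponential process
  let S : ℕ → Ω → ℝ := fun n ω => ∑ t ∈ Finset.Icc 1 n, (η * X t ω - η ^ 2 * Y t ω)
  have hSm : ∀ n ≤ T, StronglyMeasurable[𝓕 n] (S n) := by
    intro n hn
    apply Finset.stronglyMeasurable_fun_sum
    intro t ht
    rw [Finset.mem_Icc] at ht
    have htT : t ∈ Finset.Icc 1 T := Finset.mem_Icc.2 ⟨ht.1, ht.2.trans hn⟩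
    exact (stronglyMeasurable_const.mul ((hadapted t htT).mono (𝓕.mono ht.2))).sub
      (stronglyMeasurable_const.mul ((hYm t).mono (𝓕.mono ((t.sub_le 1).trans ht.2))))
  -- a.e. bounds
  have hbd : ∀ᵐ ω ∂μ, ∀ t, t ∈ Finset.Icc 1 T → (|X t ω| ≤ R ∧ 0 ≤ Y t ω) := by
    rw [ae_all_iff]
    intro t
    by_cases ht : t ∈ Finset.Icc 1 T
    · filter_upwards [hbdd t ht, hY0 t] with ω h1 h2 using fun _ => ⟨h1, h2⟩
    · exact ae_of_all _ fun ω h => absurd h ht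
  have hSbound : ∀ n ≤ T, ∀ᵐ ω ∂μ, S n ω ≤ η * R * n := by
    intro n hn
    filter_upwards [hbd] with ω hω
    calc S n ω ≤ ∑ t ∈ Finset.Icc 1 n, η * R := by
          apply Finset.sum_le_sum
          intro t ht
          rw [Finset.mem_Icc] at ht
          obtain ⟨h1, h2⟩ := hω t (Finset.mem_Icc.2 ⟨ht.1, ht.2.trans hn⟩)
          have := (abs_le.1 h1).2
          nlinarith [sq_nonneg η]
      _ = η * R * n := by
          rw [Finset.sum_const, nsmul_eq_mul, Nat.card_Icc]
          simp [mul_comm]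
  have hexpSm : ∀ n ≤ T, AEStronglyMeasurable (fun ω => Real.exp (S n ω)) μ := fun n hn =>
    (Real.continuous_exp.comp_stronglyMeasurable
      ((hSm n hn).mono (𝓕.le n))).aestronglyMeasurable
  have hexpSint : ∀ n ≤ T, Integrable (fun ω => Real.exp (S n ω)) μ := fun n hn =>
    Integrable.mono' (integrable_const (Real.exp (η * R * n))) (hexpSm n hn)
      ((hSbound n hn).mono fun ω h => by
        rw [Real.norm_eq_abs, abs_of_pos (Real.exp_pos _)]
        exact Real.exp_le_exp.2 h)
  -- key one-step bound on the conditional mgf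
  have hstep : ∀ t ∈ Finset.Icc 1 T,
      μ[fun ω => Real.exp (η * X t ω) | 𝓕 (t - 1)] ≤ᵐ[μ]
        fun ω => Real.exp (η ^ 2 * Y t ω) := by
    intro t ht
    set g : Ω → ℝ :=
      (fun _ => (1 : ℝ)) + (η • X t + η ^ 2 • fun ω => (X t ω) ^ 2) with hgdef
    have hgint : Integrable g μ :=
      (integrable_const 1).add (((hXint t ht).smul η).add ((hX2int t ht).smul (η ^ 2)))
    have hpt : (fun ω => Real.exp (η * X t ω)) ≤ᵐ[μ] g := by
      filter_upwards [hbdd t ht] with ω h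
      have habs : |η * X t ω| ≤ 1 := by
        rw [abs_mul, abs_of_pos hη1]
        nlinarith [(abs_le.1 h).2, abs_nonneg (X t ω)]
      have := exp_le_one_add_add_sq habs
      simp only [hgdef, Pi.add_apply, Pi.smul_apply, smul_eq_mul]
      nlinarith
    have hmono := condExp_mono (m := 𝓕 (t - 1)) (hexpXint t ht) hgint hpt
    have e1 : μ[g | 𝓕 (t - 1)] =ᵐ[μ]
        (fun _ => (1 : ℝ)) + (μ[η • X t | 𝓕 (t - 1)]
          + μ[η ^ 2 • (fun ω => (X t ω) ^ 2) | 𝓕 (t - 1)]) := by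
      refine (condExp_add (integrable_const 1)
        (((hXint t ht).smul η).add ((hX2int t ht).smul (η ^ 2))) _).trans ?_
      refine Filter.EventuallyEq.add (Filter.EventuallyEq.of_eq (condExp_const (𝓕.le (t-1)) (1:ℝ))) ?_
      exact condExp_add ((hXint t ht).smul η) ((hX2int t ht).smul (η ^ 2)) _
    have e2 : μ[η • X t | 𝓕 (t - 1)] =ᵐ[μ] 0 := by
      refine (condExp_smul η (X t) _).trans ?_
      filter_upwards [hcond t ht] with ω h
      simp [h]
    have e3 : μ[η ^ 2 • (fun ω => (X t ω) ^ 2) | 𝓕 (t - 1)] =ᵐ[μ]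
        fun ω => η ^ 2 * Y t ω := by
      refine (condExp_smul (η ^ 2) (fun ω => (X t ω) ^ 2) _).trans ?_
      exact ae_of_all _ fun ω => rfl
    filter_upwards [hmono, e1, e2, e3] with ω h1 h2 h3 h4
    have hY : 0 ≤ 1 → True := fun _ => trivial
    calc (μ[fun ω => Real.exp (η * X t ω) | 𝓕 (t - 1)]) ω ≤ (μ[g | 𝓕 (t - 1)]) ω := h1
      _ = 1 + (0 + η ^ 2 * Y t ω) := by
          rw [h2]; simp only [Pi.add_apply]; rw [h3, h4]; simp
      _ ≤ Real.exp (η ^ 2 * Y t ω) := by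
          have := Real.add_one_le_exp (η ^ 2 * Y t ω)
          linarith
  -- main induction: the exponential process has mean at most 1
  have key : ∀ n, n ≤ T → ∫ ω, Real.exp (S n ω) ∂μ ≤ 1 := by
    intro n
    induction n with
    | zero =>
        intro _
        have : S 0 = fun _ => 0 := by
          funext ω
          simp [S, Finset.Icc_eq_empty (by norm_num : ¬ (1:ℕ) ≤ 0)]
        rw [this]
        simp
    | succ n ih =>
        intro hn1
        have hn : n ≤ T := (Nat.le_succ n).trans hn1
        have ht1 : n + 1 ∈ Finset.Icc 1 T := Finset.mem_Icc.2 ⟨Nat.one_le_iff_ne_zero.2 (Nat.succ_ne_zero n), hn1⟩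
        set G : Ω → ℝ := fun ω => Real.exp (S n ω - η ^ 2 * Y (n + 1) ω) with hGdef
        set f : Ω → ℝ := fun ω => Real.exp (η * X (n + 1) ω) with hfdef
        have hGm : StronglyMeasurable[𝓕 n] G := by
          apply Real.continuous_exp.comp_stronglyMeasurable
          refine (hSm n hn).sub (stronglyMeasurable_const.mul ?_)
          have := (hYm (n + 1)).mono (𝓕.mono (le_refl ((n+1) - 1)))
          simpa using this
        have hsplit : (fun ω => Real.exp (S (n + 1) ω)) = G * f := by
          funext ω
          simp only [Pi.mul_apply, hGdef, hfdef, ← Real.exp_add]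
          congr 1
          have : S (n + 1) ω = S n ω + (η * X (n + 1) ω - η ^ 2 * Y (n + 1) ω) := by
            simp only [S]
            rw [Finset.sum_Icc_succ_top (Nat.one_le_iff_ne_zero.2 (Nat.succ_ne_zero n))]
          rw [this]; ring
        have hfint : Integrable f μ := hexpXint (n + 1) ht1
        have hGfint : Integrable (G * f) μ := by
          rw [← hsplit]; exact hexpSint (n + 1) hn1
        have hpull : μ[G * f | 𝓕 n] =ᵐ[μ] G * μ[f | 𝓕 n] :=
          condExp_mul_of_stronglyMeasurable_left hGm hGfint hfint
        have hstep' : μ[f | 𝓕 n] ≤ᵐ[μ] fun ω => Real.exp (η ^ 2 * Y (n + 1) ω) := by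
          have := hstep (n + 1) ht1
          simpa using this
        have hcnonneg : 0 ≤ᵐ[μ] μ[f | 𝓕 n] :=
          condExp_nonneg (ae_of_all _ fun ω => (Real.exp_pos _).le)
        calc ∫ ω, Real.exp (S (n + 1) ω) ∂μ = ∫ ω, (G * f) ω ∂μ := by rw [hsplit]
          _ = ∫ ω, (μ[G * f | 𝓕 n]) ω ∂μ := (integral_condExp (𝓕.le n)).symm
          _ = ∫ ω, (G * μ[f | 𝓕 n]) ω ∂μ := integral_congr_ae hpull
          _ ≤ ∫ ω, Real.exp (S n ω) ∂μ := by
              apply integral_mono_of_nonneg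
              · filter_upwards [hcnonneg] with ω h
                exact mul_nonneg (Real.exp_pos _).le h
              · exact hexpSint n hn
              · filter_upwards [hstep'] with ω h
                calc (G * μ[f | 𝓕 n]) ω ≤ G ω * Real.exp (η ^ 2 * Y (n + 1) ω) :=
                      mul_le_mul_of_nonneg_left h (Real.exp_pos _).le
                  _ = Real.exp (S n ω) := by
                      rw [hGdef, ← Real.exp_add]; congr 1; ring
          _ ≤ 1 := ih hn
  -- Markov's inequality
  have hint : ∫ ω, Real.exp (S T ω) ∂μ ≤ 1 := key T le_rfl
  have hmarkov := mul_meas_ge_le_integral_of_nonneg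
    (ae_of_all μ fun ω => (Real.exp_pos (S T ω)).le) (hexpSint T le_rfl) (1 / δ)
  have htR : (μ {ω | 1 / δ ≤ Real.exp (S T ω)}).toReal ≤ δ := by
    have h1δ : (0:ℝ) < 1 / δ := by positivity
    have h0 : (0:ℝ) ≤ (μ {ω | 1 / δ ≤ Real.exp (S T ω)}).toReal := ENNReal.toReal_nonneg
    calc (μ {ω | 1 / δ ≤ Real.exp (S T ω)}).toReal
        = δ * (1 / δ * (μ {ω | 1 / δ ≤ Real.exp (S T ω)}).toReal) := by
          field_simp
      _ ≤ δ * 1 := mul_le_mul_of_nonneg_left (hmarkov.trans hint) hδ1.le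
      _ = δ := mul_one δ
  have hmeasle : μ {ω | 1 / δ ≤ Real.exp (S T ω)} ≤ ENNReal.ofReal δ := by
    rw [← ENNReal.ofReal_toReal (measure_ne_top μ _)]
    exact ENNReal.ofReal_le_ofReal htR
  -- the target event
  set A : Set Ω := {ω | ∑ t ∈ Finset.Icc 1 T, X t ω ≤
      η * ∑ t ∈ Finset.Icc 1 T, (μ[fun ω' => (X t ω') ^ 2 | 𝓕 (t - 1)]) ω
        + Real.log (1 / δ) / η} with hAdef
  have hAmeas : MeasurableSet A := by
    apply measurableSet_le
    · exact Finset.measurable_sum _ fun t ht => (hXm t ht).measurable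
    · apply Measurable.add
      · exact (Finset.measurable_sum _ fun t ht =>
          ((hYm t).mono (𝓕.le _)).measurable).const_mul η
      · exact measurable_const
  have hsub : Aᶜ ⊆ {ω | 1 / δ ≤ Real.exp (S T ω)} := by
    intro ω hω
    simp only [Set.mem_compl_iff, hAdef, Set.mem_setOf_eq, not_le] at hω
    have hS : S T ω = η * ∑ t ∈ Finset.Icc 1 T, X t ω
        - η ^ 2 * ∑ t ∈ Finset.Icc 1 T, Y t ω := by
      simp only [S]
      rw [Finset.sum_sub_distrib, ← Finset.mul_sum, ← Finset.mul_sum]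
    have hlog : Real.log (1 / δ) < S T ω := by
      rw [hS]
      have h2 : η * (η * ∑ t ∈ Finset.Icc 1 T, Y t ω + Real.log (1 / δ) / η)
          < η * ∑ t ∈ Finset.Icc 1 T, X t ω := by
        exact (mul_lt_mul_iff_right₀ hη1).2 hω
      have h3 : η * (Real.log (1 / δ) / η) = Real.log (1 / δ) := by field_simp
      nlinarith
    show 1 / δ ≤ Real.exp (S T ω)
    have := Real.exp_log (by positivity : (0:ℝ) < 1 / δ)
    rw [← this]
    exact (Real.exp_lt_exp.2 hlog).le
  have hAc : μ Aᶜ ≤ ENNReal.ofReal δ := (measure_mono hsub).trans hmeasle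
  have hsum : μ A + μ Aᶜ = 1 := by
    rw [measure_add_measure_compl hAmeas, measure_univ]
  calc ENNReal.ofReal (1 - δ) = 1 - ENNReal.ofReal δ := by
        rw [ENNReal.ofReal_sub 1 hδ1.le, ENNReal.ofReal_one]
    _ ≤ μ A := by
        rw [tsub_le_iff_right]
        calc (1:ENNReal) = μ A + μ Aᶜ := hsum.symm
          _ ≤ μ A + ENNReal.ofReal δ := add_le_add_right hAc _
end
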